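/- Let G₁₁ (q × r), G₁₂ (q × m), G₂₁ (p × r), G₂₂ (p × m) be complex matrices with G₁₂ᴴG₁₂ invertible, let X (m × p) and Y (m × m) be complex matrices with Y invertible and M := Y − X·G₂₂ invertible, set G₁₂^L := (G₁₂ᴴG₁₂)⁻¹G₁₂ᴴ, Φ := M·G₁₂^L, Ψ := I − G₁₂·G₁₂^L, T := G₁₁ + G₁₂·M⁻¹·X·G₂₁, let Γ̂ be a Hermitian r × r complex matrix, and let Φ_c be any m × q complex matrix. If the block matrix fromBlocks (Γ̂ − (Ψ·G₁₁)ᴴ·(Ψ·G₁₁)) (Φ·G₁₁ + X·G₂₁)ᴴ (Φ·G₁₁ + X·G₂₁) (Φ_c·Φᴴ + Φ·Φ_cᴴ − Φ_c·Φ_cᴴ) is positive semidefinite, then Γ̂ − Tᴴ·T is positive semidefinite. -/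

import Mathlib

open Matrix ComplexOrder

/-- Left inverse `G^L := (GᴴG)⁻¹Gᴴ` of a full-column-rank matrix. -/
noncomputable def leftInv {q m : ℕ} (G : Matrix (Fin q) (Fin m) ℂ) :
    Matrix (Fin m) (Fin q) ℂ :=
  (Gᴴ * G)⁻¹ * Gᴴ

lemma corner_aux {m q : ℕ} (V P : Matrix (Fin m) (Fin q) ℂ) :
    P * Vᴴ + V * Pᴴ - P * Pᴴ + (V - P) * (V - P)ᴴ = V * Vᴴ := by
  rw [Matrix.conjTranspose_sub, Matrix.sub_mul, Matrix.mul_sub, Matrix.mul_sub]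
  abel

lemma posDef_of_posSemidef_isUnit {n : ℕ} {D : Matrix (Fin n) (Fin n) ℂ}
    (h1 : D.PosSemidef) (h2 : IsUnit D) : D.PosDef := by
  refine Matrix.PosDef.of_dotProduct_mulVec_pos h1.1 fun x hx =>
    lt_of_le_of_ne (h1.dotProduct_mulVec_nonneg x) fun he => hx ?_
  have h0 : D *ᵥ x = 0 := (h1.dotProduct_mulVec_zero_iff x).mp he.symm
  have := Matrix.mulVec_injective_iff_isUnit.mpr h2
  exact this (by simpa using h0)

theorem spatial_regret_convexification {q r p m : ℕ}
    (G11 : Matrix (Fin q) (Fin r) ℂ) (G12 : Matrix (Fin q) (Fin m) ℂ)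
    (G21 : Matrix (Fin p) (Fin r) ℂ) (G22 : Matrix (Fin p) (Fin m) ℂ)
    (hG12 : IsUnit (G12ᴴ * G12))
    (X : Matrix (Fin m) (Fin p) ℂ) (Y : Matrix (Fin m) (Fin m) ℂ)
    (hY : IsUnit Y) (hM : IsUnit (Y - X * G22))
    (Γhat : Matrix (Fin r) (Fin r) ℂ) (hΓ : Γhat.IsHermitian)
    (Φc : Matrix (Fin m) (Fin q) ℂ)
    (h : (Matrix.fromBlocks
        (Γhat - ((1 - G12 * leftInv G12) * G11)ᴴ * ((1 - G12 * leftInv G12) * G11))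
        (((Y - X * G22) * leftInv G12) * G11 + X * G21)ᴴ
        (((Y - X * G22) * leftInv G12) * G11 + X * G21)
        (Φc * ((Y - X * G22) * leftInv G12)ᴴ +
          ((Y - X * G22) * leftInv G12) * Φcᴴ - Φc * Φcᴴ)).PosSemidef) :
    (Γhat - (G11 + G12 * (Y - X * G22)⁻¹ * X * G21)ᴴ *
        (G11 + G12 * (Y - X * G22)⁻¹ * X * G21)).PosSemidef := by
  classical
  set M : Matrix (Fin m) (Fin m) ℂ := Y - X * G22 with hMdef
  set L : Matrix (Fin m) (Fin q) ℂ := leftInv G12 with hLdef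
  set N : Matrix (Fin m) (Fin m) ℂ := G12ᴴ * G12 with hNdef
  have hNdet : IsUnit N.det := (Matrix.isUnit_iff_isUnit_det _).mp hG12
  have hMdet : IsUnit M.det := (Matrix.isUnit_iff_isUnit_det _).mp hM
  have hMHdet : IsUnit Mᴴ.det := by
    rw [Matrix.det_conjTranspose]; exact hMdet.star
  have hLG : L * G12 = 1 := by
    rw [hLdef, leftInv, Matrix.mul_assoc, ← hNdef, Matrix.nonsing_inv_mul _ hNdet]
  have hNH : Nᴴ = N := by
    rw [hNdef, conjTranspose_mul, conjTranspose_conjTranspose]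
  have hNinvH : (N⁻¹)ᴴ = N⁻¹ := by
    rw [Matrix.conjTranspose_nonsing_inv, hNH]
  have hLH : Lᴴ = G12 * N⁻¹ := by
    rw [hLdef, leftInv, conjTranspose_mul, conjTranspose_conjTranspose, ← hNdef, hNinvH]
  have hLLH : L * Lᴴ = N⁻¹ := by
    rw [hLH, hLdef, leftInv, ← hNdef]
    calc N⁻¹ * G12ᴴ * (G12 * N⁻¹) = N⁻¹ * (N * N⁻¹) := by
          simp only [hNdef, Matrix.mul_assoc]
      _ = N⁻¹ := by rw [Matrix.mul_nonsing_inv _ hNdet, Matrix.mul_one]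
  -- abbreviations
  set S : Matrix (Fin q) (Fin r) ℂ := (1 - G12 * L) * G11 with hSdef
  set B : Matrix (Fin m) (Fin r) ℂ := (M * L) * G11 + X * G21 with hBdef
  set D : Matrix (Fin m) (Fin m) ℂ := (M * L) * (M * L)ᴴ with hDdef
  have hGΨ : G12ᴴ * (1 - G12 * L) = 0 := by
    rw [Matrix.mul_sub, Matrix.mul_one, hLdef, leftInv, ← hNdef, ← Matrix.mul_assoc,
      ← Matrix.mul_assoc, ← hNdef]
    rw [show N * N⁻¹ * G12ᴴ = N * (N⁻¹ * G12ᴴ) from Matrix.mul_assoc _ _ _,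
      Matrix.mul_nonsing_inv_cancel_left _ _ hNdet, sub_self]
  have hGS : G12ᴴ * S = 0 := by
    rw [hSdef, ← Matrix.mul_assoc, hGΨ, Matrix.zero_mul]
  have hSG : Sᴴ * G12 = 0 := by
    have := congrArg conjTranspose hGS
    simpa [conjTranspose_mul] using this
  have hDeq : D = M * (N⁻¹ * Mᴴ) := by
    rw [hDdef, conjTranspose_mul]
    calc (M * L) * (Lᴴ * Mᴴ) = M * ((L * Lᴴ) * Mᴴ) := by simp only [Matrix.mul_assoc]
      _ = _ := by rw [hLLH]
  -- Step 1: the exact block matrix with D in the corner is PSD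
  have hblk : (Matrix.fromBlocks (Γhat - Sᴴ * S) Bᴴ B D).PosSemidef := by
    have hEE : (Matrix.fromBlocks (0 : Matrix (Fin r) (Fin r) ℂ)
        (0 : Matrix (Fin r) (Fin m) ℂ) (0 : Matrix (Fin m) (Fin r) ℂ)
        ((M * L - Φc) * (M * L - Φc)ᴴ)).PosSemidef := by
      have := Matrix.posSemidef_conjTranspose_mul_self
        (Matrix.fromBlocks (0 : Matrix (Fin q) (Fin r) ℂ) ((M * L - Φc)ᴴ)
          (0 : Matrix (Fin q) (Fin r) ℂ) (0 : Matrix (Fin q) (Fin m) ℂ))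
      simpa [Matrix.fromBlocks_conjTranspose, Matrix.fromBlocks_multiply] using this
    have hsum := h.add hEE
    rw [Matrix.fromBlocks_add] at hsum
    simp only [add_zero] at hsum
    have hcorner : Φc * (M * L)ᴴ + (M * L) * Φcᴴ - Φc * Φcᴴ +
        (M * L - Φc) * (M * L - Φc)ᴴ = D := corner_aux (M * L) Φc
    rw [hcorner] at hsum
    exact hsum
  -- Step 2: D is positive definite
  have hDunit : IsUnit D := by
    rw [hDeq]
    exact hM.mul ((Matrix.isUnit_nonsing_inv_iff.mpr hG12).mul
      ((Matrix.isUnit_iff_isUnit_det _).mpr hMHdet))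
  have hDpd : D.PosDef :=
    posDef_of_posSemidef_isUnit (hDdef ▸ Matrix.posSemidef_self_mul_conjTranspose (M * L)) hDunit
  have hDinv : D⁻¹ = Mᴴ⁻¹ * (N * M⁻¹) := by
    apply Matrix.inv_eq_right_inv
    rw [hDeq]
    calc M * (N⁻¹ * Mᴴ) * (Mᴴ⁻¹ * (N * M⁻¹))
        = M * (N⁻¹ * (Mᴴ * (Mᴴ⁻¹ * (N * M⁻¹)))) := by simp only [Matrix.mul_assoc]
      _ = M * (N⁻¹ * (N * M⁻¹)) := by rw [Matrix.mul_nonsing_inv_cancel_left _ _ hMHdet]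
      _ = M * M⁻¹ := by rw [Matrix.nonsing_inv_mul_cancel_left _ _ hNdet]
      _ = 1 := Matrix.mul_nonsing_inv _ hMdet
  -- Step 3: Schur complement
  haveI : Invertible D := hDunit.invertible
  have hschur : ((Γhat - Sᴴ * S) - Bᴴ * D⁻¹ * (Bᴴ)ᴴ).PosSemidef := by
    rw [← Matrix.PosDef.fromBlocks₂₂ _ _ hDpd, conjTranspose_conjTranspose]
    exact hblk
  rw [conjTranspose_conjTranspose] at hschur
  -- Step 4: identify with the goal
  have hT : G11 + G12 * M⁻¹ * X * G21 = S + G12 * (M⁻¹ * B) := by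
    rw [hBdef, Matrix.mul_add M⁻¹, Matrix.mul_add G12]
    rw [show (M * L) * G11 = M * (L * G11) from Matrix.mul_assoc _ _ _,
      Matrix.nonsing_inv_mul_cancel_left _ _ hMdet]
    rw [hSdef, Matrix.sub_mul, Matrix.one_mul]
    simp only [Matrix.mul_assoc]
    abel
  have hMinvH : (M⁻¹)ᴴ = Mᴴ⁻¹ := by rw [Matrix.conjTranspose_nonsing_inv]
  have hCC : (G12 * (M⁻¹ * B))ᴴ * (G12 * (M⁻¹ * B)) = Bᴴ * (Mᴴ⁻¹ * (N * M⁻¹)) * B := by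
    simp only [conjTranspose_mul, hMinvH, hNdef, Matrix.mul_assoc]
  have hexp : (S + G12 * (M⁻¹ * B))ᴴ * (S + G12 * (M⁻¹ * B))
      = Sᴴ * S + Bᴴ * (Mᴴ⁻¹ * (N * M⁻¹)) * B := by
    rw [conjTranspose_add, Matrix.add_mul,
      Matrix.mul_add Sᴴ S (G12 * (M⁻¹ * B)),
      Matrix.mul_add (G12 * (M⁻¹ * B))ᴴ S (G12 * (M⁻¹ * B))]
    have c1 : Sᴴ * (G12 * (M⁻¹ * B)) = 0 := by
      rw [← Matrix.mul_assoc, hSG, Matrix.zero_mul]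
    have c2 : (G12 * (M⁻¹ * B))ᴴ * S = 0 := by
      rw [conjTranspose_mul, Matrix.mul_assoc, hGS, Matrix.mul_zero]
    rw [c1, c2, hCC, add_zero, zero_add]
  have key : Γhat - (G11 + G12 * M⁻¹ * X * G21)ᴴ * (G11 + G12 * M⁻¹ * X * G21)
      = (Γhat - Sᴴ * S) - Bᴴ * D⁻¹ * B := by
    rw [hT, hDinv, hexp, sub_add_eq_sub_sub]
  rw [key]
  exact hschur
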